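/- Define the Bell-pair fidelity thresholds F₁(d) = ((2^d - 1 + √d)/(2^d √d))^{1/(d-1)} and F₂(d) = (2^{-d} + (2^d-1)(2^d-2+sqrt((2^d-2)²+2^{d+3}d))/(2^{2d+1}d))^{1/(d-1)}. Then as d → ∞, 1 - F₁(d) ~ ln(d)/(2(d-1)) and 1 - F₂(d) ~ ln(d)/(d-1); equivalently lim_{d→∞} (1-F₂(d))/(1-F₁(d)) = 2. -/

import Mathlib

set_option maxHeartbeats 1000000

open Filter Real
lemma hpow0' : Tendsto (fun d : ℕ => ((2:ℝ)^d)⁻¹) atTop (nhds 0) := by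
  simp only [← inv_pow]
  exact tendsto_pow_atTop_nhds_zero_of_lt_one (by norm_num) (by norm_num)

lemma hdpow' : Tendsto (fun d : ℕ => (d:ℝ) * ((2:ℝ)^d)⁻¹) atTop (nhds 0) := by
  simp only [← inv_pow]
  exact tendsto_self_mul_const_pow_of_lt_one (by norm_num) (by norm_num)

lemma sqrt_le_nat (d : ℕ) : Real.sqrt d ≤ d := by
  have hdd : (d:ℝ) ≤ (d:ℝ)^2 := by
    exact_mod_cast (Nat.le_self_pow two_ne_zero d)
  calc Real.sqrt d ≤ Real.sqrt ((d:ℝ)^2) := Real.sqrt_le_sqrt hdd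
    _ = d := Real.sqrt_sq (Nat.cast_nonneg d)

lemma hsqpow' : Tendsto (fun d : ℕ => Real.sqrt d * ((2:ℝ)^d)⁻¹) atTop (nhds 0) := by
  have h1 : ∀ d : ℕ, (0:ℝ) ≤ Real.sqrt d * ((2:ℝ)^d)⁻¹ := fun d => by positivity
  have h2 : ∀ d : ℕ, Real.sqrt d * ((2:ℝ)^d)⁻¹ ≤ (d:ℝ) * ((2:ℝ)^d)⁻¹ := fun d =>
    mul_le_mul_of_nonneg_right (sqrt_le_nat d) (by positivity)
  exact tendsto_of_tendsto_of_tendsto_of_le_of_le tendsto_const_nhds hdpow' h1 h2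

lemma hlogd' : Tendsto (fun d : ℕ => Real.log d / ((d:ℝ) - 1)) atTop (nhds 0) := by
  have h1 : Tendsto (fun d : ℕ => Real.log d / (d:ℝ)) atTop (nhds 0) :=
    (Real.isLittleO_log_id_atTop.tendsto_div_nhds_zero).comp tendsto_natCast_atTop_atTop
  have h2 : Tendsto (fun d : ℕ => (d:ℝ) / ((d:ℝ) - 1)) atTop (nhds 1) := by
    have hsub : Tendsto (fun d : ℕ => (d:ℝ) - 1) atTop atTop :=
      tendsto_atTop_add_const_right _ (-1) tendsto_natCast_atTop_atTop |>.congr (fun d => by ring)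
    have hinv : Tendsto (fun d : ℕ => ((d:ℝ) - 1)⁻¹) atTop (nhds 0) := hsub.inv_tendsto_atTop
    have : Tendsto (fun d : ℕ => 1 + ((d:ℝ) - 1)⁻¹) atTop (nhds 1) := by
      simpa using tendsto_const_nhds.add hinv
    refine this.congr' ?_
    filter_upwards [eventually_ge_atTop 2] with d hd
    have : ((d:ℝ) - 1) ≠ 0 := by
      have : (2:ℝ) ≤ d := by exact_mod_cast hd
      nlinarith
    field_simp
    ring
  have h3 := h1.mul h2
  rw [zero_mul] at h3
  refine h3.congr' ?_
  filter_upwards [eventually_ge_atTop 2] with d hd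
  have hne : (d:ℝ) ≠ 0 := by
    have : (2:ℝ) ≤ d := by exact_mod_cast hd
    linarith
  field_simp
lemma hslope' : Tendsto (fun t : ℝ => (Real.exp t - 1) / t) (nhdsWithin 0 {0}ᶜ) (nhds 1) := by
  have h := Real.hasDerivAt_exp 0
  rw [hasDerivAt_iff_tendsto_slope] at h
  rw [Real.exp_zero] at h
  refine h.congr (fun t => ?_)
  simp [slope_def_field, Real.exp_zero]

lemma key (A : ℕ → ℝ) (c : ℝ) (hc : 0 < c) (hApos : ∀ᶠ d : ℕ in atTop, 0 < A d)
    (hlim : Tendsto (fun d : ℕ => Real.log (A d) / Real.log d) atTop (nhds (-c))) :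
    Tendsto (fun d : ℕ => (1 - A d ^ ((1:ℝ)/((d:ℝ)-1))) / (c * Real.log d / ((d:ℝ)-1)))
      atTop (nhds 1) := by
  have hd2 : ∀ᶠ d : ℕ in atTop, (2:ℕ) ≤ d := eventually_ge_atTop 2
  have hlogpos : ∀ᶠ d : ℕ in atTop, 0 < Real.log d := by
    filter_upwards [hd2] with d hd
    exact Real.log_pos (by exact_mod_cast hd)
  have hdm1 : ∀ᶠ d : ℕ in atTop, 0 < (d:ℝ) - 1 := by
    filter_upwards [hd2] with d hd
    have : (2:ℝ) ≤ d := by exact_mod_cast hd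
    linarith
  set x : ℕ → ℝ := fun d => (1/((d:ℝ)-1)) * Real.log (A d) with hxdef
  have hx0 : Tendsto x atTop (nhds 0) := by
    have h := hlim.mul hlogd'
    rw [mul_zero] at h
    refine h.congr' ?_
    filter_upwards [hlogpos, hdm1] with d hl hm
    simp only [hxdef]
    rw [div_mul_div_comm, mul_comm (Real.log (A d)), mul_div_mul_left _ _ hl.ne', div_eq_inv_mul, one_div]
  have hxneg : ∀ᶠ d : ℕ in atTop, x d < 0 := by
    have hev : ∀ᶠ d : ℕ in atTop, Real.log (A d) / Real.log d < 0 :=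
      hlim.eventually (eventually_lt_nhds (by linarith : -c < 0))
    filter_upwards [hev, hlogpos, hdm1] with d h1 h2 h3
    have hL : Real.log (A d) < 0 := by
      by_contra hcon
      push_neg at hcon
      exact absurd (div_nonneg hcon h2.le) (not_le.mpr h1)
    have : (0:ℝ) < 1/((d:ℝ)-1) := by positivity
    exact mul_neg_of_pos_of_neg this hL
  have hxne : Tendsto x atTop (nhdsWithin 0 {0}ᶜ) :=
    tendsto_nhdsWithin_of_tendsto_nhds_of_eventually_within _ hx0
      (hxneg.mono fun d h => ne_of_lt h)
  have hcomp : Tendsto (fun d : ℕ => (Real.exp (x d) - 1) / x d) atTop (nhds 1) :=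
    hslope'.comp hxne
  have hratio : Tendsto (fun d : ℕ => (-(Real.log (A d) / Real.log d)) / c) atTop (nhds 1) := by
    have h := hlim.neg.div_const c
    rw [neg_neg, div_self hc.ne'] at h
    exact h
  have hmul := hcomp.mul hratio
  rw [mul_one] at hmul
  refine hmul.congr' ?_
  filter_upwards [hApos, hlogpos, hdm1, hxneg] with d hA hl hm hxn
  have hrw : A d ^ ((1:ℝ)/((d:ℝ)-1)) = Real.exp (x d) := by
    rw [Real.rpow_def_of_pos hA, hxdef]
    ring_nf
  rw [hrw]
  have hxne' : x d ≠ 0 := ne_of_lt hxn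
  have hLne : Real.log (A d) ≠ 0 := by
    intro h
    rw [hxdef] at hxn
    simp only [h, mul_zero] at hxn
    exact lt_irrefl 0 hxn
  rw [hxdef] at hxne' ⊢
  field_simp
  ring
lemma loglim (u : ℕ → ℝ) (hu : Tendsto u atTop (nhds 1)) :
    Tendsto (fun d : ℕ => Real.log (u d) / Real.log d) atTop (nhds 0) := by
  have hlogu : Tendsto (fun d : ℕ => Real.log (u d)) atTop (nhds 0) := by
    have := (Real.continuousAt_log one_ne_zero).tendsto.comp hu
    rwa [Real.log_one] at this
  exact hlogu.div_atTop (Real.tendsto_log_atTop.comp tendsto_natCast_atTop_atTop)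

lemma hA1lim : Tendsto (fun d : ℕ =>
    Real.log (((2:ℝ)^d - 1 + Real.sqrt d) / ((2:ℝ)^d * Real.sqrt d)) / Real.log d)
    atTop (nhds (-(1/2))) := by
  set u : ℕ → ℝ := fun d => 1 - ((2:ℝ)^d)⁻¹ + Real.sqrt d * ((2:ℝ)^d)⁻¹ with hudef
  have hu : Tendsto u atTop (nhds 1) := by
    have := ((tendsto_const_nhds (x := (1:ℝ))).sub hpow0').add hsqpow'
    simpa using this
  have hupos : ∀ᶠ d : ℕ in atTop, 0 < u d := hu.eventually (eventually_gt_nhds one_pos)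
  have h := (loglim u hu).sub (tendsto_const_nhds (x := (1/2 : ℝ)))
  rw [zero_sub] at h
  refine h.congr' ?_
  filter_upwards [hupos, eventually_ge_atTop 2] with d hup hd2
  have hd1 : (1:ℝ) < d := by
    have : (2:ℝ) ≤ d := by exact_mod_cast hd2
    linarith
  have hsq : (0:ℝ) < Real.sqrt d := Real.sqrt_pos.mpr (by linarith)
  have hp : (0:ℝ) < (2:ℝ)^d := by positivity
  have hlog : Real.log d ≠ 0 := (Real.log_pos hd1).ne'
  have heq : ((2:ℝ)^d - 1 + Real.sqrt d) / ((2:ℝ)^d * Real.sqrt d) = u d / Real.sqrt d := by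
    rw [hudef]
    field_simp
  rw [heq, Real.log_div hup.ne' hsq.ne', Real.log_sqrt (Nat.cast_nonneg d), sub_div]
  congr 1
  field_simp

lemma hA2lim : Tendsto (fun d : ℕ =>
    Real.log (1 / 2^d + ((2:ℝ)^d - 1) * ((2:ℝ)^d - 2 +
      Real.sqrt (((2:ℝ)^d - 2)^2 + 2^(d+3) * d)) / ((2:ℝ)^(2*d+1) * d)) / Real.log d)
    atTop (nhds (-1)) := by
  set v : ℕ → ℝ := fun d => (d:ℝ) * ((2:ℝ)^d)⁻¹ + (1 - ((2:ℝ)^d)⁻¹) *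
    (1 - 2*((2:ℝ)^d)⁻¹ +
      Real.sqrt ((1 - 2*((2:ℝ)^d)⁻¹)^2 + 8*(d:ℝ)*((2:ℝ)^d)⁻¹)) / 2 with hvdef
  have hv : Tendsto v atTop (nhds 1) := by
    have hX : Tendsto (fun d : ℕ => (1 - 2*((2:ℝ)^d)⁻¹)^2 + 8*(d:ℝ)*((2:ℝ)^d)⁻¹)
        atTop (nhds 1) := by
      have h1 : Tendsto (fun d : ℕ => 1 - 2*((2:ℝ)^d)⁻¹) atTop (nhds 1) := by
        simpa using tendsto_const_nhds.sub ((tendsto_const_nhds (x := (2:ℝ))).mul hpow0')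
      have h2 := (h1.pow 2).add ((tendsto_const_nhds (x := (8:ℝ))).mul hdpow')
      norm_num at h2
      refine h2.congr (fun d => by ring)
    have hsqrt : Tendsto (fun d : ℕ =>
        Real.sqrt ((1 - 2*((2:ℝ)^d)⁻¹)^2 + 8*(d:ℝ)*((2:ℝ)^d)⁻¹)) atTop (nhds 1) := by
      have := hX.sqrt
      rwa [Real.sqrt_one] at this
    have h1 : Tendsto (fun d : ℕ => 1 - 2*((2:ℝ)^d)⁻¹) atTop (nhds 1) := by
      simpa using tendsto_const_nhds.sub ((tendsto_const_nhds (x := (2:ℝ))).mul hpow0')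
    have h2 : Tendsto (fun d : ℕ => 1 - ((2:ℝ)^d)⁻¹) atTop (nhds 1) := by
      simpa using tendsto_const_nhds.sub hpow0'
    have := hdpow'.add (((h2.mul (h1.add hsqrt)).div_const 2))
    norm_num at this
    exact this
  have hvpos : ∀ᶠ d : ℕ in atTop, 0 < v d := hv.eventually (eventually_gt_nhds one_pos)
  have h := (loglim v hv).sub (tendsto_const_nhds (x := (1 : ℝ)))
  rw [zero_sub] at h
  refine h.congr' ?_
  filter_upwards [hvpos, eventually_ge_atTop 2] with d hvp hd2
  have hd1 : (1:ℝ) < d := by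
    have : (2:ℝ) ≤ d := by exact_mod_cast hd2
    linarith
  have hdpos : (0:ℝ) < d := by linarith
  have hp : (0:ℝ) < (2:ℝ)^d := by positivity
  have hlog : Real.log d ≠ 0 := (Real.log_pos hd1).ne'
  have hsqrt : Real.sqrt (((2:ℝ)^d - 2)^2 + 2^(d+3) * d)
      = (2:ℝ)^d * Real.sqrt ((1 - 2*((2:ℝ)^d)⁻¹)^2 + 8*(d:ℝ)*((2:ℝ)^d)⁻¹) := by
    have hinv : (2:ℝ)^d * ((2:ℝ)^d)⁻¹ = 1 := mul_inv_cancel₀ hp.ne'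
    have h8 : ((2:ℝ)^d - 2)^2 + 2^(d+3) * d = ((2:ℝ)^d)^2 * ((1 - 2*((2:ℝ)^d)⁻¹)^2 + 8*(d:ℝ)*((2:ℝ)^d)⁻¹) := by
      rw [show ((2:ℝ)^(d+3)) = (2:ℝ)^d * 8 by rw [pow_add]; norm_num]
      linear_combination (4*(2:ℝ)^d - 4*(1 + (2:ℝ)^d * ((2:ℝ)^d)⁻¹) - 8*(2:ℝ)^d*d) * hinv
    rw [h8, Real.sqrt_mul (by positivity), Real.sqrt_sq hp.le]
  have heq : (1 / 2^d + ((2:ℝ)^d - 1) * ((2:ℝ)^d - 2 +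
      Real.sqrt (((2:ℝ)^d - 2)^2 + 2^(d+3) * d)) / ((2:ℝ)^(2*d+1) * d)) = v d / d := by
    rw [hsqrt, hvdef, show ((2:ℝ)^(2*d+1)) = 2 * ((2:ℝ)^d)^2 by
      rw [pow_succ, mul_comm 2 d, pow_mul]; ring]
    field_simp
  rw [heq, Real.log_div hvp.ne' hdpos.ne', sub_div]
  congr 1
  field_simp

lemma hA1pos : ∀ᶠ d : ℕ in atTop,
    0 < ((2:ℝ)^d - 1 + Real.sqrt d) / ((2:ℝ)^d * Real.sqrt d) := by
  filter_upwards [eventually_ge_atTop 1] with d hd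
  have h1 : (2:ℝ) ≤ (2:ℝ)^d := by
    calc (2:ℝ) = 2^1 := by norm_num
    _ ≤ 2^d := pow_le_pow_right₀ (by norm_num) hd
  have hsq : (0:ℝ) < Real.sqrt d := Real.sqrt_pos.mpr (by exact_mod_cast Nat.pos_of_ne_zero (by omega))
  have hnum : (0:ℝ) < (2:ℝ)^d - 1 + Real.sqrt d := by nlinarith
  positivity

lemma hA2pos : ∀ᶠ d : ℕ in atTop,
    0 < (1 / 2^d + ((2:ℝ)^d - 1) * ((2:ℝ)^d - 2 +
      Real.sqrt (((2:ℝ)^d - 2)^2 + 2^(d+3) * d)) / ((2:ℝ)^(2*d+1) * d)) := by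
  filter_upwards [eventually_ge_atTop 1] with d hd
  have h1 : (2:ℝ) ≤ (2:ℝ)^d := by
    calc (2:ℝ) = 2^1 := by norm_num
    _ ≤ 2^d := pow_le_pow_right₀ (by norm_num) hd
  have hdpos : (0:ℝ) < d := by exact_mod_cast Nat.pos_of_ne_zero (by omega)
  have hp : (0:ℝ) < (2:ℝ)^d := by positivity
  have hs : (0:ℝ) ≤ Real.sqrt (((2:ℝ)^d - 2)^2 + 2^(d+3) * d) := Real.sqrt_nonneg _
  have h2 : (0:ℝ) ≤ ((2:ℝ)^d - 1) * ((2:ℝ)^d - 2 +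
      Real.sqrt (((2:ℝ)^d - 2)^2 + 2^(d+3) * d)) / ((2:ℝ)^(2*d+1) * d) := by
    apply div_nonneg
    · apply mul_nonneg (by linarith)
      have : (0:ℝ) ≤ (2:ℝ)^d - 2 := by linarith
      linarith
    · positivity
  have h3 : (0:ℝ) < 1 / (2:ℝ)^d := by positivity
  linarith

theorem stmt_14 :
    let F1 : ℕ → ℝ := fun d =>
      (((2:ℝ)^d - 1 + Real.sqrt d) / ((2:ℝ)^d * Real.sqrt d)) ^ ((1:ℝ) / (d - 1))
    let F2 : ℕ → ℝ := fun d =>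
      (1 / 2^d + ((2:ℝ)^d - 1) * ((2:ℝ)^d - 2 +
        Real.sqrt (((2:ℝ)^d - 2)^2 + 2^(d+3) * d)) / ((2:ℝ)^(2*d+1) * d)) ^ ((1:ℝ) / (d - 1))
    Filter.Tendsto (fun d : ℕ => (1 - F1 d) / (Real.log d / (2 * ((d:ℝ) - 1))))
      Filter.atTop (nhds 1) ∧
    Filter.Tendsto (fun d : ℕ => (1 - F2 d) / (Real.log d / ((d:ℝ) - 1)))
      Filter.atTop (nhds 1) ∧
    Filter.Tendsto (fun d : ℕ => (1 - F2 d) / (1 - F1 d)) Filter.atTop (nhds 2) := by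
  intro F1 F2
  have hk1 := key _ (1/2) (by norm_num) hA1pos (by simpa using hA1lim)
  have hk2 := key _ 1 (by norm_num) hA2pos (by simpa using hA2lim)
  have h1 : Filter.Tendsto (fun d : ℕ => (1 - F1 d) / (Real.log d / (2 * ((d:ℝ) - 1))))
      Filter.atTop (nhds 1) := by
    refine hk1.congr (fun d => ?_)
    have hF1 : F1 d = (((2:ℝ)^d - 1 + Real.sqrt d) / ((2:ℝ)^d * Real.sqrt d))
        ^ ((1:ℝ) / ((d:ℝ) - 1)) := rfl
    rw [hF1]
    congr 1
    rw [div_mul_eq_div_div_swap]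
    ring
  have h2 : Filter.Tendsto (fun d : ℕ => (1 - F2 d) / (Real.log d / ((d:ℝ) - 1)))
      Filter.atTop (nhds 1) := by
    refine hk2.congr (fun d => ?_)
    have hF2 : F2 d = (1 / 2^d + ((2:ℝ)^d - 1) * ((2:ℝ)^d - 2 +
        Real.sqrt (((2:ℝ)^d - 2)^2 + 2^(d+3) * d)) / ((2:ℝ)^(2*d+1) * d))
        ^ ((1:ℝ) / ((d:ℝ) - 1)) := rfl
    rw [hF2]
    congr 1
    ring
  refine ⟨h1, h2, ?_⟩
  have h3 := (h2.div h1 one_ne_zero).mul_const 2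
  norm_num at h3
  refine h3.congr' ?_
  filter_upwards [eventually_ge_atTop 2] with d hd2
  have hd1 : (1:ℝ) < d := by
    have : (2:ℝ) ≤ d := by exact_mod_cast hd2
    linarith
  have hlog : Real.log d ≠ 0 := (Real.log_pos hd1).ne'
  have hdm : ((d:ℝ) - 1) ≠ 0 := by linarith
  rcases eq_or_ne (1 - F1 d) 0 with hb | hb
  · simp [hb, div_zero]
  · field_simp
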